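/- Let X be a 2-dimensional complex inner product space and A a conjugate-linear isometric involution on X. Let ψ⁺, ψ⁻ : ℝ → X be continuous functions such that for every θ ∈ ℝ: ‖ψ⁺(θ)‖ = ‖ψ⁻(θ)‖ = 1, A(ψ⁺(θ)) = ψ⁺(θ), A(ψ⁻(θ)) = ψ⁻(θ), ⟨ψ⁺(θ), ψ⁻(θ)⟩ = 0, and ψ⁺(θ + π) = ψ⁻(θ) or ψ⁺(θ + π) = −ψ⁻(θ). Then ψ⁺(θ + 2π) = −ψ⁺(θ) for all θ ∈ ℝ. -/

import Mathlib

open ComplexConjugate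

/-- A continuous `±1`-valued function on `ℝ` is constant. -/
lemma stmt10_sign_const {f : ℝ → ℝ} (hf : Continuous f)
    (h : ∀ x, f x = 1 ∨ f x = -1) : ∀ a b : ℝ, f a = f b := by
  intro a b
  by_contra hne
  have h0 : (0:ℝ) ∈ Set.uIcc (f a) (f b) := by
    rcases h a with ha | ha <;> rcases h b with hb | hb <;>
      rw [ha, hb] at hne ⊢ <;> first
        | exact absurd rfl hne
        | (rw [Set.mem_uIcc]; norm_num)
  obtain ⟨c, -, hc⟩ := intermediate_value_uIcc (hf.continuousOn (s := Set.uIcc a b)) h0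
  rcases h c with h' | h' <;> rw [hc] at h' <;> norm_num at h'

/-- Expansion of any vector in a 2-dim complex inner product space w.r.t. an
orthonormal pair. -/
lemma stmt10_expand {X : Type*} [NormedAddCommGroup X] [InnerProductSpace ℂ X]
    (hdim : Module.finrank ℂ X = 2) (f1 f2 : X) (h1 : ‖f1‖ = 1) (h2 : ‖f2‖ = 1)
    (h12 : (inner ℂ f1 f2 : ℂ) = 0) (u : X) :
    u = (inner ℂ f1 u : ℂ) • f1 + (inner ℂ f2 u : ℂ) • f2 := by
  haveI : FiniteDimensional ℂ X := FiniteDimensional.of_finrank_eq_succ hdim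
  have h21 : (inner ℂ f2 f1 : ℂ) = 0 := inner_eq_zero_symm.mp h12
  have h11 : (inner ℂ f1 f1 : ℂ) = 1 := by
    rw [inner_self_eq_norm_sq_to_K, h1]; norm_num
  have h22 : (inner ℂ f2 f2 : ℂ) = 1 := by
    rw [inner_self_eq_norm_sq_to_K, h2]; norm_num
  set w : X := u - ((inner ℂ f1 u : ℂ) • f1 + (inner ℂ f2 u : ℂ) • f2) with hw
  have hw1 : (inner ℂ f1 w : ℂ) = 0 := by
    simp [hw, inner_sub_right, inner_add_right, inner_smul_right, h11, h12, h1]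
  have hw2 : (inner ℂ f2 w : ℂ) = 0 := by
    simp [hw, inner_sub_right, inner_add_right, inner_smul_right, h21, h22, h2]
  have hwz : w = 0 := by
    by_contra hwne
    have hnw : ‖w‖ ≠ 0 := by simpa using hwne
    set v : Fin 3 → X := ![f1, f2, (‖w‖:ℂ)⁻¹ • w] with hv
    have hon : Orthonormal ℂ v := by
      constructor
      · intro i
        fin_cases i <;> simp [hv, h1, h2, norm_smul, hnw]
      · intro i j hij
        have hw1' := inner_eq_zero_symm.mp hw1
        have hw2' := inner_eq_zero_symm.mp hw2
        fin_cases i <;> fin_cases j <;>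
          simp only [hv, Matrix.cons_val_zero, Matrix.cons_val_one, Matrix.head_cons,
            Matrix.cons_val_two, Matrix.tail_cons, Fin.mk_zero, Fin.mk_one] <;>
          simp_all [inner_smul_left, inner_smul_right, h12, h21, hw1, hw2, h1, h2, inner_sub_right, inner_add_right]
    have := hon.linearIndependent.fintype_card_le_finrank
    rw [hdim] at this
    simp at this
  exact (sub_eq_zero.mp hwz)

theorem stmt10 {X : Type*} [NormedAddCommGroup X] [InnerProductSpace ℂ X]
    (hdim : Module.finrank ℂ X = 2)
    (A : X → X)
    (hAadd : ∀ x y, A (x + y) = A x + A y)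
    (hAsmul : ∀ (c : ℂ) (x : X), A (c • x) = (conj c) • A x)
    (hAisom : ∀ x, ‖A x‖ = ‖x‖)
    (hAinv : ∀ x, A (A x) = x)
    (ψp ψm : ℝ → X) (hcp : Continuous ψp) (hcm : Continuous ψm)
    (hnp : ∀ θ, ‖ψp θ‖ = 1) (hnm : ∀ θ, ‖ψm θ‖ = 1)
    (hAp : ∀ θ, A (ψp θ) = ψp θ) (hAm : ∀ θ, A (ψm θ) = ψm θ)
    (horth : ∀ θ, (inner ℂ (ψp θ) (ψm θ) : ℂ) = 0)
    (hrel : ∀ θ, ψp (θ + Real.pi) = ψm θ ∨ ψp (θ + Real.pi) = -ψm θ) :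
    ∀ θ : ℝ, ψp (θ + 2 * Real.pi) = -ψp θ := by
  -- inner products of `A`-fixed vectors are real
  have him : ∀ x y : X, A x = x → A y = y → (inner ℂ x y : ℂ) = ((inner ℂ x y : ℂ).re : ℂ) := by
    intro x y hx hy
    have key : ‖x + Complex.I • y‖ = ‖x - Complex.I • y‖ := by
      calc ‖x + Complex.I • y‖ = ‖A (x + Complex.I • y)‖ := (hAisom _).symm
        _ = ‖x - Complex.I • y‖ := by
            rw [hAadd, hAsmul, hx, hy, Complex.conj_I, neg_smul, ← sub_eq_add_neg]
    have h1 := @norm_add_sq ℂ _ _ _ _ x (Complex.I • y)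
    have h2 := @norm_sub_sq ℂ _ _ _ _ x (Complex.I • y)
    rw [key] at h1
    have hre : RCLike.re (inner ℂ x (Complex.I • y) : ℂ) = 0 := by
      nlinarith [h1, h2]
    rw [inner_smul_right] at hre
    have himz : (inner ℂ x y : ℂ).im = 0 := by
      simpa [Complex.mul_re] using hre
    exact (Complex.ext (by simp) (by simp [himz])).symm
  set e1 : X := ψp 0 with he1def
  set e2 : X := ψm 0 with he2def
  -- coordinate functions
  set a : ℝ → ℝ := fun θ => (inner ℂ e1 (ψp θ) : ℂ).re with hadef
  set b : ℝ → ℝ := fun θ => (inner ℂ e2 (ψp θ) : ℂ).re with hbdef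
  set c : ℝ → ℝ := fun θ => (inner ℂ e1 (ψm θ) : ℂ).re with hcdef
  set d : ℝ → ℝ := fun θ => (inner ℂ e2 (ψm θ) : ℂ).re with hddef
  have ha : ∀ θ, (inner ℂ e1 (ψp θ) : ℂ) = ((a θ : ℝ) : ℂ) := fun θ => him _ _ (hAp 0) (hAp θ)
  have hb : ∀ θ, (inner ℂ e2 (ψp θ) : ℂ) = ((b θ : ℝ) : ℂ) := fun θ => him _ _ (hAm 0) (hAp θ)
  have hc : ∀ θ, (inner ℂ e1 (ψm θ) : ℂ) = ((c θ : ℝ) : ℂ) := fun θ => him _ _ (hAp 0) (hAm θ)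
  have hd : ∀ θ, (inner ℂ e2 (ψm θ) : ℂ) = ((d θ : ℝ) : ℂ) := fun θ => him _ _ (hAm 0) (hAm θ)
  have he12 : (inner ℂ e1 e2 : ℂ) = 0 := horth 0
  have hexp : ∀ u : X, u = (inner ℂ e1 u : ℂ) • e1 + (inner ℂ e2 u : ℂ) • e2 :=
    stmt10_expand hdim e1 e2 (hnp 0) (hnm 0) he12
  have hexp_p : ∀ θ, ψp θ = ((a θ : ℝ) : ℂ) • e1 + ((b θ : ℝ) : ℂ) • e2 := by
    intro θ; rw [← ha, ← hb]; exact hexp (ψp θ)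
  have hexp_m : ∀ θ, ψm θ = ((c θ : ℝ) : ℂ) • e1 + ((d θ : ℝ) : ℂ) • e2 := by
    intro θ; rw [← hc, ← hd]; exact hexp (ψm θ)
  have he11 : (inner ℂ e1 e1 : ℂ) = 1 := by
    rw [inner_self_eq_norm_sq_to_K, hnp 0]; norm_num
  have he22 : (inner ℂ e2 e2 : ℂ) = 1 := by
    rw [inner_self_eq_norm_sq_to_K, hnm 0]; norm_num
  have he21 : (inner ℂ e2 e1 : ℂ) = 0 := inner_eq_zero_symm.mp he12
  have hIP : ∀ (α β γ δ : ℝ),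
      (inner ℂ (((α:ℝ):ℂ) • e1 + ((β:ℝ):ℂ) • e2) (((γ:ℝ):ℂ) • e1 + ((δ:ℝ):ℂ) • e2) : ℂ)
        = ((α * γ + β * δ : ℝ) : ℂ) := by
    intro α β γ δ
    simp only [inner_add_left, inner_add_right, inner_smul_left, inner_smul_right,
      he11, he22, he12, he21, Complex.conj_ofReal, RCLike.star_def]
    push_cast; ring
  have hab : ∀ θ, a θ ^ 2 + b θ ^ 2 = 1 := by
    intro θ
    have h := inner_self_eq_norm_sq_to_K (𝕜 := ℂ) (ψp θ)
    rw [hnp θ] at h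
    rw [hexp_p θ, hIP] at h
    norm_num at h
    have h' : a θ * a θ + b θ * b θ = 1 := by exact_mod_cast h
    nlinarith [h']
  have hcd : ∀ θ, c θ ^ 2 + d θ ^ 2 = 1 := by
    intro θ
    have h := inner_self_eq_norm_sq_to_K (𝕜 := ℂ) (ψm θ)
    rw [hnm θ] at h
    rw [hexp_m θ, hIP] at h
    norm_num at h
    have h' : c θ * c θ + d θ * d θ = 1 := by exact_mod_cast h
    nlinarith [h']
  have hacbd : ∀ θ, a θ * c θ + b θ * d θ = 0 := by
    intro θ
    have h := horth θ
    rw [hexp_p θ, hexp_m θ, hIP] at h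
    exact_mod_cast h
  -- the antipodal signs
  set s : ℝ → ℝ := fun θ => (inner ℂ (ψm θ) (ψp (θ + Real.pi)) : ℂ).re with hsdef
  set t : ℝ → ℝ := fun θ => (inner ℂ (ψp θ) (ψm (θ + Real.pi)) : ℂ).re with htdef
  have hmm : ∀ θ, (inner ℂ (ψm θ) (ψm θ) : ℂ) = 1 := by
    intro θ; rw [inner_self_eq_norm_sq_to_K, hnm θ]; norm_num
  have hpp : ∀ θ, (inner ℂ (ψp θ) (ψp θ) : ℂ) = 1 := by
    intro θ; rw [inner_self_eq_norm_sq_to_K, hnp θ]; norm_num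
  have hs1 : ∀ θ, s θ = 1 ∨ s θ = -1 := by
    intro θ
    rcases hrel θ with h | h
    · left; simp [hsdef, h, hmm θ, hnm θ]
    · right; simp [hsdef, h, inner_neg_right, hmm θ, hnm θ]
  have hps : ∀ θ, ψp (θ + Real.pi) = ((s θ : ℝ) : ℂ) • ψm θ := by
    intro θ
    rcases hrel θ with h | h
    · have : s θ = 1 := by simp [hsdef, h, hmm θ, hnm θ]
      rw [this, h]; norm_num
    · have : s θ = -1 := by simp [hsdef, h, inner_neg_right, hmm θ, hnm θ]
      rw [this, h]; norm_num
  -- the other antipodal relation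
  have hmo : ∀ θ, (inner ℂ (ψm θ) (ψm (θ + Real.pi)) : ℂ) = 0 := by
    intro θ
    have h := horth (θ + Real.pi)
    rw [hps θ, inner_smul_left] at h
    have hsne : ((s θ : ℝ) : ℂ) ≠ 0 := by
      rcases hs1 θ with h' | h' <;> rw [h'] <;> norm_num
    have : (starRingEnd ℂ) ((s θ : ℝ) : ℂ) ≠ 0 := by
      simpa [Complex.conj_ofReal] using hsne
    exact (mul_eq_zero.mp h).resolve_left this
  have hmt : ∀ θ, ψm (θ + Real.pi) = ((t θ : ℝ) : ℂ) • ψp θ := by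
    intro θ
    have h := stmt10_expand hdim (ψp θ) (ψm θ) (hnp θ) (hnm θ) (horth θ) (ψm (θ + Real.pi))
    rw [hmo θ, zero_smul, add_zero] at h
    rw [h, him _ _ (hAp θ) (hAm (θ + Real.pi))]
  have ht1 : ∀ θ, t θ = 1 ∨ t θ = -1 := by
    intro θ
    have h := hnm (θ + Real.pi)
    rw [hmt θ, norm_smul, hnp θ, mul_one, Complex.norm_real, Real.norm_eq_abs] at h
    exact abs_eq (by norm_num : (0:ℝ) ≤ 1) |>.mp h
  -- continuity and constancy of the signs
  have hst : Continuous fun θ : ℝ => θ + Real.pi := continuous_id.add continuous_const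
  have hcs : Continuous s := by
    exact Complex.continuous_re.comp (Continuous.inner hcm (hcp.comp hst))
  have hct : Continuous t := by
    exact Complex.continuous_re.comp (Continuous.inner hcp (hcm.comp hst))
  have hsconst : ∀ θ, s θ = s 0 := fun θ => stmt10_sign_const hcs hs1 θ 0
  have htconst : ∀ θ, t θ = t 0 := fun θ => stmt10_sign_const hct ht1 θ 0
  -- the determinant function
  set D : ℝ → ℝ := fun θ => a θ * d θ - b θ * c θ with hDdef
  have hD1 : ∀ θ, D θ = 1 ∨ D θ = -1 := by
    intro θ
    have hsq : D θ ^ 2 = 1 := by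
      have : D θ ^ 2 = (a θ ^ 2 + b θ ^ 2) * (c θ ^ 2 + d θ ^ 2)
          - (a θ * c θ + b θ * d θ) ^ 2 := by simp only [hDdef]; ring
      rw [hab θ, hcd θ, hacbd θ] at this
      rw [this]; ring
    rcases mul_self_eq_one_iff.mp (by nlinarith [hsq] : D θ * D θ = 1) with h | h
    · exact Or.inl h
    · exact Or.inr h
  have hcD : Continuous D := by
    have hca : Continuous a := Complex.continuous_re.comp (Continuous.inner continuous_const hcp)
    have hcb : Continuous b := Complex.continuous_re.comp (Continuous.inner continuous_const hcp)
    have hcc : Continuous c := Complex.continuous_re.comp (Continuous.inner continuous_const hcm)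
    have hcd' : Continuous d := Complex.continuous_re.comp (Continuous.inner continuous_const hcm)
    exact (hca.mul hcd').sub (hcb.mul hcc)
  have hDconst : ∀ θ, D θ = D 0 := fun θ => stmt10_sign_const hcD hD1 θ 0
  have hD0 : D 0 = 1 := by
    simp only [hDdef, hadef, hbdef, hcdef, hddef]; rw [← he1def, ← he2def]
    rw [he11, he22, he12, he21]; simp
  -- coordinates after a half turn
  have hre_mul : ∀ (r : ℝ) (z : ℂ), ((r : ℂ) * z).re = r * z.re := by
    intro r z; simp [Complex.mul_re]
  have hashift : ∀ θ, a (θ + Real.pi) = s θ * c θ := by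
    intro θ
    simp only [hadef, hcdef, hps θ, inner_smul_right, hre_mul]
  have hbshift : ∀ θ, b (θ + Real.pi) = s θ * d θ := by
    intro θ
    simp only [hbdef, hddef, hps θ, inner_smul_right, hre_mul]
  have hcshift : ∀ θ, c (θ + Real.pi) = t θ * a θ := by
    intro θ
    simp only [hcdef, hadef, hmt θ, inner_smul_right, hre_mul]
  have hdshift : ∀ θ, d (θ + Real.pi) = t θ * b θ := by
    intro θ
    simp only [hddef, hbdef, hmt θ, inner_smul_right, hre_mul]
  -- conclude s 0 * t 0 = -1
  have hDshift : D (0 + Real.pi) = -(s 0 * t 0) * D 0 := by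
    simp only [hDdef, hashift, hbshift, hcshift, hdshift]
    ring
  have hst0 : s 0 * t 0 = -1 := by
    have h := hDconst (0 + Real.pi)
    rw [hDshift, hD0] at h
    linarith
  -- final computation
  intro θ
  have hθ : θ + 2 * Real.pi = (θ + Real.pi) + Real.pi := by ring
  rw [hθ, hps (θ + Real.pi), hmt θ, smul_smul, hsconst (θ + Real.pi), htconst θ]
  have : ((s 0 : ℝ) : ℂ) * ((t 0 : ℝ) : ℂ) = -1 := by
    rw [← Complex.ofReal_mul, hst0]; norm_num
  rw [this, neg_one_smul]
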